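/- Let S be a finite nonempty set of reals p_i with 0 < p_i < 1/2 such that ∏_{i∈S}(1-p_i) ≤ 1/2, but such that removing the element with minimum probability p_l yields a set S* with ∏_{i∈S*}(1-p_i) > 1/2. If p_m denotes the maximum probability in S, then ∑_{i∈S} p_i < 1 - (p_m - p_l). -/
import Mathlib


open Finset

theorem max_to_min_greedy_saturation_mean_bound
    {ι : Type*} [DecidableEq ι] (S : Finset ι) (p : ι → ℝ)
    (hne : S.Nonempty)
    (hp : ∀ i ∈ S, 0 < p i ∧ p i < 1/2)
    (hsat : ∏ i ∈ S, (1 - p i) ≤ 1/2)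
    (l : ι) (hl : l ∈ S) (hlmin : ∀ i ∈ S, p l ≤ p i)
    (hunsat : ∏ i ∈ S.erase l, (1 - p i) > 1/2)
    (m : ι) (hm : m ∈ S) (hmmax : ∀ i ∈ S, p i ≤ p m) :
    ∑ i ∈ S, p i < 1 - (p m - p l) := by
  by_cases hS' : (S.erase l).Nonempty
  · obtain ⟨m', hm'S, hm'max⟩ := Finset.exists_max_image (S.erase l) p hS'
    have hm'S' : m' ∈ S := Finset.mem_of_mem_erase hm'S
    set T := (S.erase l).erase m' with hT
    have hTsub : ∀ i ∈ T, i ∈ S := fun i hi =>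
      Finset.mem_of_mem_erase (Finset.mem_of_mem_erase hi)
    have hprodsplit : (1 - p m') * ∏ i ∈ T, (1 - p i) = ∏ i ∈ S.erase l, (1 - p i) :=
      Finset.mul_prod_erase (S.erase l) (fun i => 1 - p i) hm'S
    have hexp : ∏ i ∈ T, (1 - p i) ≤ Real.exp (-∑ i ∈ T, p i) := by
      rw [← Finset.sum_neg_distrib, Real.exp_sum]
      refine Finset.prod_le_prod (fun i hi => ?_) (fun i hi => ?_)
      · have := hp i (hTsub i hi); linarith
      · have := Real.add_one_le_exp (-p i); linarith
    have hq : 0 < p m' ∧ p m' < 1/2 := hp m' hm'S'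
    set q := p m' with hqdef
    set s := ∑ i ∈ T, p i with hsdef
    have h1 : 1/2 < (1 - q) * Real.exp (-s) := by
      have hnn : 0 < 1 - q := by linarith [hq.2]
      calc 1/2 < ∏ i ∈ S.erase l, (1 - p i) := hunsat
        _ = (1 - q) * ∏ i ∈ T, (1 - p i) := hprodsplit.symm
        _ ≤ (1 - q) * Real.exp (-s) := by
            exact mul_le_mul_of_nonneg_left hexp (le_of_lt hnn)
    have hmul : Real.exp (-s) * Real.exp s = 1 := by
      rw [← Real.exp_add]; simp
    have hes : Real.exp s < 2 * (1 - q) := by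
      have hp1 : 0 < Real.exp s := Real.exp_pos s
      nlinarith
    have h2 : (2 : ℝ) * (1 - q) < Real.exp (1 - 2*q) := by
      have := Real.add_one_lt_exp (x := 1 - 2*q) (by intro h; nlinarith [hq.2] : (1:ℝ) - 2*q ≠ 0)
      linarith
    have hs : s < 1 - 2*q := by
      have := lt_trans hes h2
      exact Real.exp_lt_exp.mp this
    have hpm_le_q : p m ≤ q := by
      by_cases hml : m = l
      · subst hml; exact hlmin m' hm'S'
      · exact hm'max m (Finset.mem_erase.mpr ⟨hml, hm⟩)
    have hsum1 : ∑ i ∈ S, p i = p l + ∑ i ∈ S.erase l, p i :=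
      (Finset.add_sum_erase S p hl).symm
    have hsum2 : ∑ i ∈ S.erase l, p i = q + s :=
      (Finset.add_sum_erase (S.erase l) p hm'S).symm
    rw [hsum1, hsum2]
    linarith
  · have hSl : S = {l} := by
      apply Finset.Subset.antisymm
      · intro i hi
        by_contra hil
        exact hS' ⟨i, Finset.mem_erase.mpr ⟨by simpa using hil, hi⟩⟩
      · simpa using hl
    have hml : m = l := by
      have := hm; rw [hSl] at this; simpa using this
    rw [hSl, hml]
    simp only [Finset.sum_singleton]
    have := hp l hl
    linarith [this.1, this.2]
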